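/- Under the inversive-plane setup below, for each i ∈ {4,5} and each j ∈ {2,3}: if x ∈ X_i and y, y' ∈ Y_j, then (y'/y)·x ∈ X_i. Similarly, for each j ∈ {2,3} and each i ∈ {4,5}: if y ∈ Y_j and x, x' ∈ X_i, then (x'/x)·y ∈ Y_j. -/

import Mathlib

open OnePoint

/-- A generalized circle in the inversive plane `ℝ² ∪ {∞}` (modeled as `OnePoint ℂ`):
either a Euclidean circle, or an affine line together with the point at infinity. -/
def IsGenCircle (S : Set (OnePoint ℂ)) : Prop :=
  (∃ c : ℂ, ∃ r : ℝ, 0 < r ∧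
      S = (fun z : ℂ => (z : OnePoint ℂ)) '' {z : ℂ | ‖z - c‖ = r}) ∨
  (∃ z₀ e : ℂ, e ≠ 0 ∧
      S = (fun z : ℂ => (z : OnePoint ℂ)) '' {z : ℂ | ∃ t : ℝ, z = z₀ + (t : ℂ) * e} ∪ {∞})

/-- The signed norm on `ℝ² ≅ ℂ`. -/
noncomputable def signedNorm (z : ℂ) : ℝ :=
  if 0 < z.im ∨ (z.im = 0 ∧ 0 ≤ z.re) then ‖z‖ else -‖z‖

/-- The set of signed norms of points of the `X`-axis having color `i`. -/
noncomputable def xAxisColorSet (Γ : OnePoint ℂ → ℕ) (i : ℕ) : Set ℝ :=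
  signedNorm '' {z : ℂ | z.im = 0 ∧ Γ (z : OnePoint ℂ) = i}

/-- The set of signed norms of points of the line through the origin with direction `d`
having color `j`. -/
noncomputable def lineColorSet (Γ : OnePoint ℂ → ℕ) (d : ℂ) (j : ℕ) : Set ℝ :=
  signedNorm '' {z : ℂ | (∃ t : ℝ, z = (t : ℂ) * d) ∧ Γ (z : OnePoint ℂ) = j}

lemma signedNorm_real (x : ℝ) : signedNorm (x : ℂ) = x := by
  unfold signedNorm
  simp only [Complex.ofReal_im, Complex.ofReal_re, Complex.norm_real, Real.norm_eq_abs]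
  rcases le_or_gt 0 x with h | h
  · rw [if_pos (Or.inr ⟨by norm_num, h⟩), abs_of_nonneg h]
  · rw [if_neg (by simp [h.not_ge, h.ne]), abs_of_neg h]; ring

lemma signedNorm_mul (d : ℂ) (hdim : d.im ≠ 0) (t : ℝ) :
    signedNorm ((t : ℂ) * d) = (if 0 < d.im then (1:ℝ) else -1) * t * ‖d‖ := by
  unfold signedNorm
  simp only [Complex.mul_im, Complex.mul_re, Complex.ofReal_im, Complex.ofReal_re, norm_mul,
    Complex.norm_real, Real.norm_eq_abs]
  rcases lt_trichotomy t 0 with ht | rfl | ht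
  · rcases hdim.lt_or_gt with hd | hd
    · rw [if_pos (Or.inl (by nlinarith)), if_neg hd.not_gt, abs_of_neg ht]; ring
    · rw [if_neg (by push_neg; refine ⟨by nlinarith, fun h => absurd h (by nlinarith)⟩),
        if_pos hd, abs_of_neg ht]; ring
  · simp
  · rcases hdim.lt_or_gt with hd | hd
    · rw [if_neg (by push_neg; refine ⟨by nlinarith, fun h => absurd h (by nlinarith)⟩),
        if_neg hd.not_gt, abs_of_pos ht]; ring
    · rw [if_pos (Or.inl (by nlinarith)), if_pos hd, abs_of_pos ht]; ring

lemma four_concyclic (d : ℂ) (hdim : d.im ≠ 0) (a b t r : ℝ) (ht : t ≠ 0)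
    (hK : a * b = t * r * Complex.normSq d) :
    ∃ S : Set (OnePoint ℂ), IsGenCircle S ∧
      (((a : ℂ)) : OnePoint ℂ) ∈ S ∧ (((b : ℂ)) : OnePoint ℂ) ∈ S ∧
      (((t : ℂ) * d) : OnePoint ℂ) ∈ S ∧ (((r : ℂ) * d) : OnePoint ℂ) ∈ S := by
  set n := Complex.normSq d with hn
  set K := a * b with hKdef
  set c1 : ℝ := (a + b) / 2 with hc1
  set c2 : ℝ := ((n * t ^ 2 + K) / (2 * t) - c1 * d.re) / d.im with hc2
  set c : ℂ := ⟨c1, c2⟩ with hc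
  have hcre : c.re = c1 := rfl
  have hcim : c.im = c2 := rfl
  have key : ∀ w : ℂ, Complex.normSq w - 2 * (c1 * w.re + c2 * w.im) + K = 0 →
      Complex.normSq (w - c) = Complex.normSq c - K := by
    intro w hw
    have h2 : Complex.normSq (w - c)
        = Complex.normSq w - 2 * (c1 * w.re + c2 * w.im) + Complex.normSq c := by
      simp only [Complex.normSq_apply, Complex.sub_re, Complex.sub_im, hcre, hcim]
      ring
    rw [h2]; linarith
  have hc2im : c2 * d.im = (n * t ^ 2 + K) / (2 * t) - c1 * d.re := by
    rw [hc2, div_mul_cancel₀ _ hdim]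
  have Ea : Complex.normSq (a : ℂ) - 2 * (c1 * (a:ℂ).re + c2 * (a:ℂ).im) + K = 0 := by
    simp only [Complex.normSq_ofReal, Complex.ofReal_re, Complex.ofReal_im]
    rw [hc1, hKdef]; ring
  have Eb : Complex.normSq (b : ℂ) - 2 * (c1 * (b:ℂ).re + c2 * (b:ℂ).im) + K = 0 := by
    simp only [Complex.normSq_ofReal, Complex.ofReal_re, Complex.ofReal_im]
    rw [hc1, hKdef]; ring
  have normSq_smul : ∀ s : ℝ, Complex.normSq ((s:ℂ) * d) = s ^ 2 * n := by
    intro s; rw [Complex.normSq_mul, Complex.normSq_ofReal, hn]; ring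
  have resmul : ∀ s : ℝ, ((s:ℂ) * d).re = s * d.re := by
    intro s; simp [Complex.mul_re]
  have imsmul : ∀ s : ℝ, ((s:ℂ) * d).im = s * d.im := by
    intro s; simp [Complex.mul_im]
  have Et : Complex.normSq ((t:ℂ) * d) - 2 * (c1 * ((t:ℂ)*d).re + c2 * ((t:ℂ)*d).im) + K = 0 := by
    rw [normSq_smul, resmul, imsmul]
    have : c1 * (t * d.re) + c2 * (t * d.im) = t * ((n * t ^ 2 + K) / (2 * t)) := by
      rw [mul_comm c2 (t * d.im), mul_assoc, mul_comm d.im c2, hc2im]; ring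
    rw [this]; field_simp; ring
  have Er : Complex.normSq ((r:ℂ) * d) - 2 * (c1 * ((r:ℂ)*d).re + c2 * ((r:ℂ)*d).im) + K = 0 := by
    rw [normSq_smul, resmul, imsmul]
    have h1 : c1 * (r * d.re) + c2 * (r * d.im) = r * ((n * t ^ 2 + K) / (2 * t)) := by
      rw [mul_comm c2 (r * d.im), mul_assoc, mul_comm d.im c2, hc2im]; ring
    rw [h1, hK]
    field_simp
    ring
  set r0 : ℝ := ‖(a : ℂ) - c‖ with hr0
  have hnorm : ∀ w : ℂ, Complex.normSq w - 2 * (c1 * w.re + c2 * w.im) + K = 0 →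
      ‖w - c‖ = r0 := by
    intro w hw
    rw [hr0, Complex.norm_def, Complex.norm_def,
      key w hw, key _ Ea]
  have htd : ((t:ℂ) * d) ≠ (a : ℂ) := by
    intro h
    have := congrArg Complex.im h
    rw [imsmul] at this
    simp at this
    rcases this with h' | h' <;> [exact ht h'; exact hdim h']
  have hr0pos : 0 < r0 := by
    rcases eq_or_lt_of_le (norm_nonneg ((a:ℂ) - c)) with h | h
    · exfalso
      have ha0 : (a : ℂ) - c = 0 := by
        have := h.symm
        rwa [norm_eq_zero] at this
      have h2 : ‖(t:ℂ) * d - c‖ = r0 := hnorm _ Et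
      rw [hr0, ha0, norm_zero] at h2
      rw [norm_eq_zero, sub_eq_zero] at h2
      have ha0' : (a:ℂ) = c := by rwa [sub_eq_zero] at ha0
      exact htd (h2.trans ha0'.symm)
    · exact h
  refine ⟨(fun z : ℂ => (z : OnePoint ℂ)) '' {z : ℂ | ‖z - c‖ = r0},
    Or.inl ⟨c, r0, hr0pos, rfl⟩, ⟨(a:ℂ), rfl, rfl⟩, ⟨(b:ℂ), hnorm _ Eb, rfl⟩,
    ⟨(t:ℂ)*d, hnorm _ Et, rfl⟩, ⟨(r:ℂ)*d, hnorm _ Er, rfl⟩⟩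

lemma ncard_four {a b c e : ℕ} (hab : a ≠ b) (hac : a ≠ c) (hae : a ≠ e)
    (hbc : b ≠ c) (hbe : b ≠ e) (hce : c ≠ e) : ({a, b, c, e} : Set ℕ).ncard = 4 := by
  rw [Set.ncard_insert_of_notMem (by simp [hab, hac, hae]) (Set.toFinite _),
    Set.ncard_insert_of_notMem (by simp [hbc, hbe]) (Set.toFinite _),
    Set.ncard_insert_of_notMem (by simp [hce]) (Set.toFinite _),
    Set.ncard_singleton]

lemma quad_colors (Γ : OnePoint ℂ → ℕ)
    (hrange : Set.range Γ = {1, 2, 3, 4, 5})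
    (h3 : ∀ S : Set (OnePoint ℂ), IsGenCircle S → (Γ '' S).ncard ≤ 3)
    (d : ℂ) (hdim : d.im ≠ 0) (a b t r : ℝ) (ht : t ≠ 0)
    (hK : a * b = t * r * Complex.normSq d)
    (h1 : Γ ((a:ℂ) : OnePoint ℂ) ≠ Γ ((b:ℂ) : OnePoint ℂ))
    (h2 : Γ ((a:ℂ) : OnePoint ℂ) ≠ Γ (((t:ℂ)*d : ℂ) : OnePoint ℂ))
    (h4 : Γ ((a:ℂ) : OnePoint ℂ) ≠ Γ (((r:ℂ)*d : ℂ) : OnePoint ℂ))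
    (h5 : Γ ((b:ℂ) : OnePoint ℂ) ≠ Γ (((t:ℂ)*d : ℂ) : OnePoint ℂ))
    (h6 : Γ ((b:ℂ) : OnePoint ℂ) ≠ Γ (((r:ℂ)*d : ℂ) : OnePoint ℂ))
    (h7 : Γ (((t:ℂ)*d : ℂ) : OnePoint ℂ) ≠ Γ (((r:ℂ)*d : ℂ) : OnePoint ℂ)) : False := by
  obtain ⟨S, hS, m1, m2, m3, m4⟩ := four_concyclic d hdim a b t r ht hK
  have hsub : ({Γ ((a:ℂ) : OnePoint ℂ), Γ ((b:ℂ) : OnePoint ℂ),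
      Γ (((t:ℂ)*d : ℂ) : OnePoint ℂ), Γ (((r:ℂ)*d : ℂ) : OnePoint ℂ)} : Set ℕ) ⊆ Γ '' S := by
    intro x hx
    simp only [Set.mem_insert_iff, Set.mem_singleton_iff] at hx
    rcases hx with rfl | rfl | rfl | rfl
    · exact Set.mem_image_of_mem Γ m1
    · exact Set.mem_image_of_mem Γ m2
    · exact Set.mem_image_of_mem Γ m3
    · exact Set.mem_image_of_mem Γ m4
  have hfin : (Γ '' S).Finite := by
    apply Set.Finite.subset _ (Set.image_subset_range Γ S)
    rw [hrange]
    exact Set.toFinite _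
  have hle := (Set.ncard_le_ncard hsub hfin).trans (h3 S hS)
  rw [ncard_four h1 h2 h4 h5 h6 h7] at hle
  omega

lemma coe_zero_mul (d : ℂ) : ((0:ℝ):ℂ) * d = ((0:ℝ):ℂ) := by simp

lemma step1 (Γ : OnePoint ℂ → ℕ)
    (hrange : Set.range Γ = {1, 2, 3, 4, 5})
    (h3 : ∀ S : Set (OnePoint ℂ), IsGenCircle S → (Γ '' S).ncard ≤ 3)
    (h0 : Γ ((0 : ℂ) : OnePoint ℂ) = 1)
    (hX : Γ '' ((fun z : ℂ => (z : OnePoint ℂ)) '' {z : ℂ | z.im = 0} ∪ {∞}) = {1, 4, 5})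
    (d : ℂ) (hdim : d.im ≠ 0)
    (i j j' : ℕ) (hi : i = 4 ∨ i = 5) (hjj : j = 2 ∧ j' = 3 ∨ j = 3 ∧ j' = 2)
    (a t r : ℝ) (hΓa : Γ ((a:ℂ) : OnePoint ℂ) = i)
    (hΓt : Γ (((t:ℂ) * d : ℂ) : OnePoint ℂ) = j)
    (hΓr : Γ (((r:ℂ) * d : ℂ) : OnePoint ℂ) = j') :
    Γ (((t * r * Complex.normSq d / a : ℝ) : ℂ) : OnePoint ℂ) = i := by
  have ha : a ≠ 0 := by
    rintro rfl
    rw [show ((0:ℝ):ℂ) = (0:ℂ) by norm_num, h0] at hΓa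
    omega
  have ht : t ≠ 0 := by
    rintro rfl
    rw [coe_zero_mul, show ((0:ℝ):ℂ) = (0:ℂ) by norm_num, h0] at hΓt
    omega
  set b : ℝ := t * r * Complex.normSq d / a with hb
  have hK : a * b = t * r * Complex.normSq d := by
    rw [hb]; field_simp
  have hbmem : Γ ((b:ℂ) : OnePoint ℂ) ∈ ({1, 4, 5} : Set ℕ) := by
    rw [← hX]
    exact Set.mem_image_of_mem Γ (Or.inl ⟨(b:ℂ), by simp, rfl⟩)
  by_contra hne
  simp only [Set.mem_insert_iff, Set.mem_singleton_iff] at hbmem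
  exact quad_colors Γ hrange h3 d hdim a b t r ht hK
    (by rw [hΓa]; omega) (by rw [hΓa, hΓt]; omega) (by rw [hΓa, hΓr]; omega)
    (by rw [hΓt]; omega) (by rw [hΓr]; omega) (by rw [hΓt, hΓr]; omega)

lemma step2 (Γ : OnePoint ℂ → ℕ)
    (hrange : Set.range Γ = {1, 2, 3, 4, 5})
    (h3 : ∀ S : Set (OnePoint ℂ), IsGenCircle S → (Γ '' S).ncard ≤ 3)
    (h0 : Γ ((0 : ℂ) : OnePoint ℂ) = 1)
    (d : ℂ) (hdim : d.im ≠ 0)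
    (hL : Γ '' ((fun z : ℂ => (z : OnePoint ℂ)) '' {z : ℂ | ∃ t : ℝ, z = (t : ℂ) * d} ∪ {∞}) =
      {1, 2, 3})
    (i i' j : ℕ) (hii : i = 4 ∧ i' = 5 ∨ i = 5 ∧ i' = 4) (hj : j = 2 ∨ j = 3)
    (a b t : ℝ) (hΓa : Γ ((a:ℂ) : OnePoint ℂ) = i)
    (hΓb : Γ ((b:ℂ) : OnePoint ℂ) = i')
    (hΓt : Γ (((t:ℂ) * d : ℂ) : OnePoint ℂ) = j) :
    Γ ((((a * b / (t * Complex.normSq d) : ℝ) : ℂ) * d : ℂ) : OnePoint ℂ) = j := by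
  have ht : t ≠ 0 := by
    rintro rfl
    rw [coe_zero_mul, show ((0:ℝ):ℂ) = (0:ℂ) by norm_num, h0] at hΓt
    omega
  have hn : Complex.normSq d ≠ 0 := by
    intro h
    rw [Complex.normSq_eq_zero.1 h] at hdim; simp at hdim
  set r : ℝ := a * b / (t * Complex.normSq d) with hr
  have hK : a * b = t * r * Complex.normSq d := by
    rw [hr]; field_simp
  have hrmem : Γ (((r:ℂ) * d : ℂ) : OnePoint ℂ) ∈ ({1, 2, 3} : Set ℕ) := by
    rw [← hL]
    exact Set.mem_image_of_mem Γ (Or.inl ⟨(r:ℂ) * d, ⟨r, rfl⟩, rfl⟩)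
  by_contra hne
  simp only [Set.mem_insert_iff, Set.mem_singleton_iff] at hrmem
  exact quad_colors Γ hrange h3 d hdim a b t r ht hK
    (by rw [hΓa, hΓb]; omega) (by rw [hΓa, hΓt]; omega) (by rw [hΓa]; omega)
    (by rw [hΓb, hΓt]; omega) (by rw [hΓb]; omega) (by rw [hΓt]; omega)

noncomputable def sgnim (d : ℂ) : ℝ := if 0 < d.im then 1 else -1

lemma sgnim_ne_zero (d : ℂ) : sgnim d ≠ 0 := by
  unfold sgnim; split_ifs <;> norm_num

lemma signedNorm_mul' (d : ℂ) (hdim : d.im ≠ 0) (t : ℝ) :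
    signedNorm ((t : ℂ) * d) = sgnim d * t * ‖d‖ := signedNorm_mul d hdim t

lemma mem_xAxis (Γ : OnePoint ℂ → ℕ) (i : ℕ) (x : ℝ) :
    x ∈ xAxisColorSet Γ i ↔ Γ ((x:ℂ) : OnePoint ℂ) = i := by
  constructor
  · rintro ⟨z, ⟨hzim, hz⟩, rfl⟩
    have hz' : z = ((z.re : ℝ) : ℂ) := Complex.ext (by simp) (by simp [hzim])
    have h1 : signedNorm z = z.re := by
      conv_lhs => rw [hz']
      exact signedNorm_real z.re
    rw [h1, ← hz']
    exact hz
  · intro h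
    exact ⟨(x:ℂ), ⟨by simp, h⟩, signedNorm_real x⟩

lemma mem_line (Γ : OnePoint ℂ → ℕ) (d : ℂ) (hdim : d.im ≠ 0) (j : ℕ) (y : ℝ) :
    y ∈ lineColorSet Γ d j ↔
      ∃ t : ℝ, Γ (((t:ℂ) * d : ℂ) : OnePoint ℂ) = j ∧ y = sgnim d * t * ‖d‖ := by
  constructor
  · rintro ⟨z, ⟨⟨t, rfl⟩, hz⟩, rfl⟩
    exact ⟨t, hz, (signedNorm_mul' d hdim t)⟩
  · rintro ⟨t, hz, rfl⟩
    exact ⟨(t:ℂ) * d, ⟨⟨t, rfl⟩, hz⟩, signedNorm_mul' d hdim t⟩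

/-- Claim 3 of the `n = 2` proof: for `i ∈ {4,5}`, `j ∈ {2,3}`, `x ∈ Xᵢ` and `y, y' ∈ Y_j`,
we have `(y'/y)·x ∈ Xᵢ`; and symmetrically `(x'/x)·y ∈ Y_j` for `x, x' ∈ Xᵢ`, `y ∈ Y_j`. -/
theorem function_m_claim
    (Γ : OnePoint ℂ → ℕ)
    (hrange : Set.range Γ = {1, 2, 3, 4, 5})
    (h3 : ∀ S : Set (OnePoint ℂ), IsGenCircle S → (Γ '' S).ncard ≤ 3)
    (h0 : Γ ((0 : ℂ) : OnePoint ℂ) = 1) (hinf : Γ ∞ = 1)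
    (h1 : Γ ((1 : ℂ) : OnePoint ℂ) = 5)
    (hneg : ∃ x : ℝ, x < 0 ∧ Γ (((x : ℂ)) : OnePoint ℂ) = 4)
    (hX : Γ '' ((fun z : ℂ => (z : OnePoint ℂ)) '' {z : ℂ | z.im = 0} ∪ {∞}) = {1, 4, 5})
    (d : ℂ) (hd : d ≠ 0) (hdim : d.im ≠ 0)
    (hL : Γ '' ((fun z : ℂ => (z : OnePoint ℂ)) '' {z : ℂ | ∃ t : ℝ, z = (t : ℂ) * d} ∪ {∞}) =
      {1, 2, 3}) :
    (∀ i ∈ ({4, 5} : Set ℕ), ∀ j ∈ ({2, 3} : Set ℕ),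
      ∀ x ∈ xAxisColorSet Γ i, ∀ y ∈ lineColorSet Γ d j, ∀ y' ∈ lineColorSet Γ d j,
        (y' / y) * x ∈ xAxisColorSet Γ i) ∧
    (∀ j ∈ ({2, 3} : Set ℕ), ∀ i ∈ ({4, 5} : Set ℕ),
      ∀ y ∈ lineColorSet Γ d j, ∀ x ∈ xAxisColorSet Γ i, ∀ x' ∈ xAxisColorSet Γ i,
        (x' / x) * y ∈ lineColorSet Γ d j) := by
  have hn0 : Complex.normSq d ≠ 0 := fun h => hd (Complex.normSq_eq_zero.1 h)
  have hnd : ‖d‖ ≠ 0 := norm_ne_zero_iff.2 hd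
  have hσ : sgnim d ≠ 0 := sgnim_ne_zero d
  set n : ℝ := Complex.normSq d with hn
  constructor
  · intro i hi j hj x hx y hy y' hy'
    simp only [Set.mem_insert_iff, Set.mem_singleton_iff] at hi hj
    rw [mem_xAxis] at hx ⊢
    rw [mem_line Γ d hdim] at hy hy'
    obtain ⟨t, hΓt, rfl⟩ := hy
    obtain ⟨t', hΓt', rfl⟩ := hy'
    have hx0 : x ≠ 0 := by
      rintro rfl
      rw [Complex.ofReal_zero, h0] at hx
      omega
    have ht0 : t ≠ 0 := by
      rintro rfl
      rw [coe_zero_mul, Complex.ofReal_zero, h0] at hΓt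
      omega
    have ht'0 : t' ≠ 0 := by
      rintro rfl
      rw [coe_zero_mul, Complex.ofReal_zero, h0] at hΓt'
      omega
    obtain ⟨j', hjj⟩ : ∃ j', j = 2 ∧ j' = 3 ∨ j = 3 ∧ j' = 2 := by
      rcases hj with rfl | rfl
      · exact ⟨3, Or.inl ⟨rfl, rfl⟩⟩
      · exact ⟨2, Or.inr ⟨rfl, rfl⟩⟩
    have hj'mem : j' ∈ ({1, 2, 3} : Set ℕ) := by
      simp only [Set.mem_insert_iff, Set.mem_singleton_iff]
      omega
    rw [← hL] at hj'mem
    obtain ⟨p, hp, hΓp⟩ := hj'mem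
    rcases hp with ⟨z, ⟨s, rfl⟩, rfl⟩ | hp
    · -- got s with Γ(s d) = j'
      have hs0 : s ≠ 0 := by
        rintro rfl
        rw [coe_zero_mul, Complex.ofReal_zero, h0] at hΓp
        omega
      have hst1 := step1 Γ hrange h3 h0 hX d hdim i j j' hi hjj x t s hx hΓt hΓp
      set x₁ : ℝ := t * s * n / x with hx₁
      have hx₁0 : x₁ ≠ 0 :=
        div_ne_zero (mul_ne_zero (mul_ne_zero ht0 hs0) hn0) hx0
      have hst2 := step1 Γ hrange h3 h0 hX d hdim i j j' hi hjj x₁ t' s hst1 hΓt' hΓp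
      have heq : sgnim d * t' * ‖d‖ / (sgnim d * t * ‖d‖) * x = t' * s * n / x₁ := by
        rw [hx₁]
        have habs : ‖d‖ ≠ 0 := hnd
        field_simp [hσ, habs, ht0, hx0, hs0, hn0]
      rw [heq]
      exact hst2
    · exfalso
      simp only [Set.mem_singleton_iff] at hp
      subst hp
      rw [hinf] at hΓp
      omega
  · intro j hj i hi y hy x hx x' hx'
    simp only [Set.mem_insert_iff, Set.mem_singleton_iff] at hi hj
    rw [mem_xAxis] at hx hx'
    rw [mem_line Γ d hdim] at hy ⊢
    obtain ⟨t, hΓt, rfl⟩ := hy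
    have hx0 : x ≠ 0 := by
      rintro rfl
      rw [Complex.ofReal_zero, h0] at hx
      omega
    have hx'0 : x' ≠ 0 := by
      rintro rfl
      rw [Complex.ofReal_zero, h0] at hx'
      omega
    have ht0 : t ≠ 0 := by
      rintro rfl
      rw [coe_zero_mul, Complex.ofReal_zero, h0] at hΓt
      omega
    obtain ⟨i', w, hii, hw0, hΓw⟩ :
        ∃ i' : ℕ, ∃ w : ℝ, (i = 4 ∧ i' = 5 ∨ i = 5 ∧ i' = 4) ∧ w ≠ 0 ∧ Γ ((w:ℂ) : OnePoint ℂ) = i' := by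
      rcases hi with rfl | rfl
      · exact ⟨5, 1, Or.inl ⟨rfl, rfl⟩, one_ne_zero, by rw [Complex.ofReal_one]; exact h1⟩
      · obtain ⟨w, hwneg, hΓw⟩ := hneg
        exact ⟨4, w, Or.inr ⟨rfl, rfl⟩, hwneg.ne, hΓw⟩
    have hst1 := step2 Γ hrange h3 h0 d hdim hL i i' j hii hj x w t hx hΓw hΓt
    set r₁ : ℝ := x * w / (t * n) with hr₁
    have hr₁0 : r₁ ≠ 0 :=
      div_ne_zero (mul_ne_zero hx0 hw0) (mul_ne_zero ht0 hn0)
    have hst2 := step2 Γ hrange h3 h0 d hdim hL i i' j hii hj x' w r₁ hx' hΓw hst1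
    refine ⟨x' * w / (r₁ * n), hst2, ?_⟩
    rw [hr₁]
    field_simp
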